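/- Let σ be an involutive automorphism of the Lie algebra L satisfying σ(H) = −H, and let L^σ = {v ∈ L : σ(v) = v} be its fixed-point subalgebra. Then L = L^σ + g_0 + Z_L(X) (sum of vector subspaces of L). -/

import Mathlib

/-- If `σ` is an involutive automorphism of `L` with
`σ(H) = −H`, and `L^σ` its fixed-point subalgebra, then
`L = L^σ + g_0 + Z_L(X)` (sum of vector subspaces of `L`). -/
theorem stmt_15 {L : Type*} [LieRing L] [LieAlgebra ℝ L]
    [Module.Finite ℝ L] [LieAlgebra.IsSemisimple ℝ L]
    (X H Y : L)
    (hHX : ⁅H, X⁆ = (2 : ℝ) • X) (hHY : ⁅H, Y⁆ = (-2 : ℝ) • Y)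
    (hXY : ⁅X, Y⁆ = H)
    (g : ℤ → Submodule ℝ L)
    (hg : ∀ j : ℤ, g j = Module.End.eigenspace (LieAlgebra.ad ℝ L H) (j : ℝ))
    (hspan : g (-2) ⊔ g (-1) ⊔ g 0 ⊔ g 1 ⊔ g 2 = ⊤)
    (σ : L →ₗ⁅ℝ⁆ L) (hinv : ∀ v : L, σ (σ v) = v) (hσH : σ H = -H) :
    ∀ v : L, ∃ a b c : L,
      σ a = a ∧ b ∈ g 0 ∧ ⁅X, c⁆ = 0 ∧ v = a + b + c := by
  set f := LieAlgebra.ad ℝ L H with hf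
  have hfapp : ∀ w : L, f w = ⁅H, w⁆ := fun w => rfl
  -- eigenspaces for eigenvalues outside {-2,...,2} are trivial
  have key : ∀ (w : L) (μ : ℝ), μ ≠ -2 → μ ≠ -1 → μ ≠ 0 → μ ≠ 1 → μ ≠ 2 →
      ⁅H, w⁆ = μ • w → w = 0 := by
    intro w μ h1 h2 h3 h4 h5 hw
    have hmem : w ∈ f.eigenspace μ := by
      rw [Module.End.mem_eigenspace_iff, hfapp]; exact hw
    have hd := (Module.End.eigenspaces_iSupIndep f) μ
    have hle : g (-2) ⊔ g (-1) ⊔ g 0 ⊔ g 1 ⊔ g 2 ≤ ⨆ ν ≠ μ, f.eigenspace ν := by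
      have hj : ∀ j : ℤ, (j : ℝ) ≠ μ → g j ≤ ⨆ ν ≠ μ, f.eigenspace ν := by
        intro j hjμ
        rw [hg j]
        exact le_iSup₂ (f := fun ν (_ : ν ≠ μ) => f.eigenspace ν) (j : ℝ) hjμ
      refine sup_le (sup_le (sup_le (sup_le ?_ ?_) ?_) ?_) ?_
      · exact hj (-2) (by push_cast; exact fun h => h1 h.symm)
      · exact hj (-1) (by push_cast; exact fun h => h2 h.symm)
      · exact hj 0 (by push_cast; exact fun h => h3 h.symm)
      · exact hj 1 (by push_cast; exact fun h => h4 h.symm)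
      · exact hj 2 (by push_cast; exact fun h => h5 h.symm)
    have hw2 : w ∈ ⨆ ν ≠ μ, f.eigenspace ν := hle (hspan ▸ Submodule.mem_top)
    simpa using hd.le_bot ⟨hmem, hw2⟩
  -- elements of g 1 and g 2 commute with X
  have hZ : ∀ (j : ℤ), j = 1 ∨ j = 2 → ∀ w ∈ g j, ⁅X, w⁆ = 0 := by
    intro j hj w hw
    rw [hg j, Module.End.mem_eigenspace_iff, hfapp] at hw
    have hbr : ⁅H, ⁅X, w⁆⁆ = ((j : ℝ) + 2) • ⁅X, w⁆ := by
      rw [leibniz_lie, hHX, hw, smul_lie, lie_smul, add_smul]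
      abel
    rcases hj with rfl | rfl
    · exact key ⁅X, w⁆ ((1:ℝ)+2) (by norm_num) (by norm_num) (by norm_num)
        (by norm_num) (by norm_num) (by simpa using hbr)
    · exact key ⁅X, w⁆ ((2:ℝ)+2) (by norm_num) (by norm_num) (by norm_num)
        (by norm_num) (by norm_num) (by simpa using hbr)
  -- σ maps g j into g (-j)
  have hσg : ∀ (j : ℤ), ∀ w ∈ g j, σ w ∈ g (-j) := by
    intro j w hw
    rw [hg j, Module.End.mem_eigenspace_iff, hfapp] at hw
    rw [hg (-j), Module.End.mem_eigenspace_iff, hfapp]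
    have h1 : (j : ℝ) • σ w = -⁅H, σ w⁆ := by
      have h2 := σ.map_lie H w
      rw [hw, map_smul σ, hσH, neg_lie] at h2
      exact h2
    push_cast
    rw [neg_smul]
    have := congrArg Neg.neg h1
    simpa using this.symm
  -- decompose v
  intro v
  have hv : v ∈ g (-2) ⊔ g (-1) ⊔ g 0 ⊔ g 1 ⊔ g 2 := hspan ▸ Submodule.mem_top
  obtain ⟨u, hu, q2, hq2, rfl⟩ := Submodule.mem_sup.mp hv
  obtain ⟨u', hu', q1, hq1, rfl⟩ := Submodule.mem_sup.mp hu
  obtain ⟨u'', hu'', p0, hp0, rfl⟩ := Submodule.mem_sup.mp hu'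
  obtain ⟨p2, hp2, p1, hp1, rfl⟩ := Submodule.mem_sup.mp hu''
  refine ⟨(p2 + σ p2) + (p1 + σ p1), p0, q1 + q2 - σ p2 - σ p1, ?_, hp0, ?_, ?_⟩
  · simp [map_add, hinv]; abel
  · have h1 : ⁅X, q1⁆ = 0 := hZ 1 (Or.inl rfl) q1 hq1
    have h2 : ⁅X, q2⁆ = 0 := hZ 2 (Or.inr rfl) q2 hq2
    have h3 : ⁅X, σ p2⁆ = 0 := hZ 2 (Or.inr rfl) _ (by simpa using hσg (-2) p2 hp2)
    have h4 : ⁅X, σ p1⁆ = 0 := hZ 1 (Or.inl rfl) _ (by simpa using hσg (-1) p1 hp1)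
    rw [lie_sub, lie_sub, lie_add, h1, h2, h3, h4]
    abel
  · abel
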